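/- arXiv:1904.13260 — 3 statements merged into one kernel-verified Lean document; each statement's English description precedes it below -/
import Mathlib

section
/- There is no injective function h from the edge set of K₄,₄ (with parts {1,2,3,4} and {5,6,7,8}) to ℤ satisfying the following collision-avoidance constraints, where the partner pairs are (1,5), (2,6), (3,7), (4,8): for every partner pair (i, j) and every edge e = i·j' with j' ∈ {5,6,7,8}, j' ≠ j (an edge containing i but not j), h(e) does not lie in the closed interval [min over edges f containing j of h(f), max over edges f containing j of h(f)]; and symmetrically, for every partner pair (i, j) and every edge e = i'·j with i' ≠ i, h(e) does not lie in the closed interval spanned by the values h(f) of the edges f containing i. -/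
/-- Dixon-2 impossibility, combinatorially. Edges of `K₄,₄` are pairs `(i, j)`
with `i` in the left part and `j` in the right part; the partner pairs identify
left vertex `k` with right vertex `k`. Vertex `k` (right) collides with every
edge `(k, j')`, `j' ≠ k`, containing its partner, and vertex `k` (left) collides
with every edge `(i', k)`, `i' ≠ k`. A height `h(e)` avoids a vertex `v` iff it
lies outside the closed interval spanned by the heights of the edges containing
`v`, equivalently it is strictly below all of them or strictly above all of
them. No injective collision-free height assignment exists. -/
theorem dixon2_no_collision_free_heights :
    ¬ ∃ h : Fin 4 × Fin 4 → ℤ, Function.Injective h ∧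
      -- right vertex `k` collides with every edge `(k, j')`, `j' ≠ k`;
      -- the edges containing right vertex `k` are the `(i', k)`
      (∀ k j' : Fin 4, j' ≠ k →
        (∀ i' : Fin 4, h (k, j') < h (i', k)) ∨
        (∀ i' : Fin 4, h (i', k) < h (k, j'))) ∧
      -- left vertex `k` collides with every edge `(i', k)`, `i' ≠ k`;
      -- the edges containing left vertex `k` are the `(k, j')`
      (∀ k i' : Fin 4, i' ≠ k →
        (∀ j' : Fin 4, h (i', k) < h (k, j')) ∨
        (∀ j' : Fin 4, h (k, j') < h (i', k))) := by
  rintro ⟨h, hinj, hR, hL⟩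
  -- values of distinct edges are distinct
  have hne : ∀ e f : Fin 4 × Fin 4, e ≠ f → h e ≠ h f := by
    intro e f hef hval
    exact hef (hinj hval)
  -- Main dichotomy: for each k, either the diagonal (k,k) separates with all
  -- (i,k), i≠k, below and all (k,j), j≠k, above (case A), or the reverse (case B).
  have key : ∀ k : Fin 4,
      ((∀ i, i ≠ k → h (i, k) < h (k, k)) ∧ (∀ j, j ≠ k → h (k, k) < h (k, j))) ∨
      ((∀ j, j ≠ k → h (k, j) < h (k, k)) ∧ (∀ i, i ≠ k → h (k, k) < h (i, k))) := by
    intro k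
    -- if edge (k,j) is above the diagonal, it is above the whole star of right k
    have hjup : ∀ j, j ≠ k → h (k, k) < h (k, j) → ∀ i', h (i', k) < h (k, j) := by
      intro j hj hd
      rcases hR k j hj with hc | hc
      · exact absurd (hc k) (by omega)
      · exact hc
    have hjdown : ∀ j, j ≠ k → h (k, j) < h (k, k) → ∀ i', h (k, j) < h (i', k) := by
      intro j hj hd
      rcases hR k j hj with hc | hc
      · exact hc
      · exact absurd (hc k) (by omega)
    have hiup : ∀ i, i ≠ k → h (k, k) < h (i, k) → ∀ j', h (k, j') < h (i, k) := by
      intro i hi hd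
      rcases hL k i hi with hc | hc
      · exact absurd (hc k) (by omega)
      · exact hc
    have hidown : ∀ i, i ≠ k → h (i, k) < h (k, k) → ∀ j', h (i, k) < h (k, j') := by
      intro i hi hd
      rcases hL k i hi with hc | hc
      · exact hc
      · exact absurd (hc k) (by omega)
    obtain ⟨j₀, hj₀⟩ := exists_ne k
    have hj₀ne : h (k, j₀) ≠ h (k, k) := hne _ _ (by simp [hj₀])
    rcases lt_or_gt_of_ne hj₀ne with hcase | hcase
    · -- h (k, j₀) < diag : case B
      right
      have hBj : ∀ j, j ≠ k → h (k, j) < h (k, k) := by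
        intro j hj
        have hjne : h (k, j) ≠ h (k, k) := hne _ _ (by simp [hj])
        rcases lt_or_gt_of_ne hjne with h1 | h1
        · exact h1
        · -- h (k,k) < h (k,j) : then h(k,j) above all (i,k), but (k,j₀) below all (i,k)?
          exfalso
          -- pick any i ≠ k
          obtain ⟨i, hi⟩ := exists_ne k
          have hine : h (i, k) ≠ h (k, k) := hne _ _ (by simp [hi])
          rcases lt_or_gt_of_ne hine with h2 | h2
          · -- h(i,k) < diag : then (i,k) below all (k,j'), yet (k,j) above all (i',k)
            have := hidown i hi h2 j
            have := hjup j hj h1 i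
            -- h(i,k) < h(k,j) and h(i,k) < h(k,j) : no contradiction yet; use j₀
            have := hidown i hi h2 j₀
            have := hjdown j₀ hj₀ hcase i
            omega
          · -- diag < h(i,k) : (i,k) above all (k,j'), in particular above (k,j)
            have := hiup i hi h2 j
            have := hjup j hj h1 i
            omega
      refine ⟨hBj, ?_⟩
      intro i hi
      have hine : h (i, k) ≠ h (k, k) := hne _ _ (by simp [hi])
      rcases lt_or_gt_of_ne hine with h2 | h2
      · exfalso
        have := hidown i hi h2 j₀
        have := hjdown j₀ hj₀ hcase i
        omega
      · exact h2
    · -- diag < h (k, j₀) : case A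
      left
      have hAi : ∀ i, i ≠ k → h (i, k) < h (k, k) := by
        intro i hi
        have hine : h (i, k) ≠ h (k, k) := hne _ _ (by simp [hi])
        rcases lt_or_gt_of_ne hine with h2 | h2
        · exact h2
        · exfalso
          have := hiup i hi h2 j₀
          have := hjup j₀ hj₀ hcase i
          omega
      refine ⟨hAi, ?_⟩
      intro j hj
      have hjne : h (k, j) ≠ h (k, k) := hne _ _ (by simp [hj])
      rcases lt_or_gt_of_ne hjne with h1 | h1
      · exfalso
        obtain ⟨i, hi⟩ := exists_ne k
        have := hAi i hi
        have := hidown i hi (hAi i hi) j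
        have := hjdown j hj h1 i
        omega
      · exact h1
  -- Two distinct indices cannot both be in case A
  have AA : ∀ k l : Fin 4, k ≠ l →
      ((∀ i, i ≠ k → h (i, k) < h (k, k)) ∧ (∀ j, j ≠ k → h (k, k) < h (k, j))) →
      ((∀ i, i ≠ l → h (i, l) < h (l, l)) ∧ (∀ j, j ≠ l → h (l, l) < h (l, j))) →
      False := by
    intro k l hkl hA hA'
    have h1 := hA.2 l (Ne.symm hkl)   -- h(k,k) < h(k,l)
    have h2 := hA'.1 k hkl            -- h(k,l) < h(l,l)
    have h3 := hA'.2 k hkl            -- h(l,l) < h(l,k)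
    have h4 := hA.1 l (Ne.symm hkl)   -- h(l,k) < h(k,k)
    omega
  have BB : ∀ k l : Fin 4, k ≠ l →
      ((∀ j, j ≠ k → h (k, j) < h (k, k)) ∧ (∀ i, i ≠ k → h (k, k) < h (i, k))) →
      ((∀ j, j ≠ l → h (l, j) < h (l, l)) ∧ (∀ i, i ≠ l → h (l, l) < h (i, l))) →
      False := by
    intro k l hkl hB hB'
    have h1 := hB.1 l (Ne.symm hkl)   -- h(k,l) < h(k,k)
    have h2 := hB'.2 k hkl            -- h(l,l) < h(k,l)
    have h3 := hB'.1 k hkl            -- h(l,k) < h(l,l)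
    have h4 := hB.2 l (Ne.symm hkl)   -- h(k,k) < h(l,k)
    omega
  -- pigeonhole among indices 0, 1, 2
  rcases key 0 with h0 | h0 <;> rcases key 1 with h1 | h1 <;> rcases key 2 with h2 | h2
  · exact AA 0 1 (by decide) h0 h1
  · exact AA 0 1 (by decide) h0 h1
  · exact AA 0 2 (by decide) h0 h2
  · exact BB 1 2 (by decide) h1 h2
  · exact AA 1 2 (by decide) h1 h2
  · exact BB 0 2 (by decide) h0 h2
  · exact BB 0 1 (by decide) h0 h1
  · exact BB 0 1 (by decide) h0 h1
end

section
/- Define heights on the edges of K_{m,n} with parts {p₀,…,p_{m−1}}, {q₀,…,q_{n−1}} by h(q₀p_i) = i + 1 and h(q_i p_l) = −(i−1)(m+1) − l for i ≥ 1. Then h is injective, all edges containing q₀ have positive height, all other edges have nonpositive height, and for every collision pair the height of the edge lies outside [min_{e∋v} h(e), max_{e∋v} h(e)], where v is the colliding vertex: (1) for 'p₀ collides with q₀p_k (k ≥ 1)': all edges containing p₀ other than q₀p₀ have height < h(q₀p₀) = 1, so max_{e∋p₀} h(e) = h(q₀p₀), and h(q₀p_k) = k+1 > 1 = h(q₀p₀),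 hence h(q₀p_k) ∉ [min_{e∋p₀} h(e), h(q₀p₀)]; (2) for 'p_i collides with q₀p_k, k > i': h(q₀p_k) = k+1 > i+1 = max_{e∋p_i} h(e); (3) for 'q_j (j ≥ 1) collides with q_k p₀, k > j ≥ 1': h(q_k p₀) = −(k−1)(m+1) < min_l h(q_j p_l) = −(j−1)(m+1) − (m−1); (4) for 'q₀ collides with q_k p₀, k ≥ 1': h(q_k p₀) = −(k−1)(m+1) ≤ 0 < 1 = min_{e∋q₀} h(e), so h(q_k p₀) ∉ [1, m] = [min_{e∋q₀} h(e), max_{e∋q₀} h(e)]. Hence h is a collision-free height arrangement for the Dixon-1 collision pattern. -/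
/-- The explicit height function `h(q₀p_l) = l + 1`, `h(q_ip_l) = −(i−1)(m+1) − l`
for `i ≥ 1` on the edges of `K_{m,n}` is injective, positive exactly on the edges
containing `q₀`, and collision-free for the Dixon-1 collision pattern: the
collision pairs are `(p_i, q₀p_k)` for `i < k` and `(q_j, q_kp₀)` for `j < k`,
and for each collision pair the height of the edge lies outside the closed
interval spanned by the heights of the edges containing the vertex. -/
theorem dixon1_explicit_heights_collision_free (m n : ℕ) (hm : 2 ≤ m)
    (hn : 2 ≤ n) :
    ∀ h : Fin n × Fin m → ℤ,
      (h = fun e =>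
        if (e.1 : ℕ) = 0 then (e.2 : ℤ) + 1
        else -((e.1 : ℤ) - 1) * ((m : ℤ) + 1) - (e.2 : ℤ)) →
      Function.Injective h ∧
      (∀ l : Fin m, 0 < h (⟨0, by omega⟩, l)) ∧
      (∀ i : Fin n, (i : ℕ) ≠ 0 → ∀ l : Fin m, h (i, l) ≤ 0) ∧
      -- `p_i` collides with `q₀p_k` for `i < k`; edges containing `p_i`
      -- are the `(j, i)`
      (∀ i k : Fin m, (i : ℕ) < (k : ℕ) →
        (∀ j : Fin n, h ((⟨0, by omega⟩ : Fin n), k) < h (j, i)) ∨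
        (∀ j : Fin n, h (j, i) < h ((⟨0, by omega⟩ : Fin n), k))) ∧
      -- `q_j` collides with `q_kp₀` for `j < k`; edges containing `q_j`
      -- are the `(j, l)`
      (∀ j k : Fin n, (j : ℕ) < (k : ℕ) →
        (∀ l : Fin m, h (k, (⟨0, by omega⟩ : Fin m)) < h (j, l)) ∨
        (∀ l : Fin m, h (j, l) < h (k, (⟨0, by omega⟩ : Fin m)))) := by
  intro h hh
  subst hh
  refine ⟨?_, ?_, ?_, ?_, ?_⟩
  · -- injectivity
    rintro ⟨i, l⟩ ⟨i', l'⟩ heq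
    simp only at heq
    have hl : (l : ℤ) < m := by exact_mod_cast l.isLt
    have hl' : (l' : ℤ) < m := by exact_mod_cast l'.isLt
    have hl0 : (0:ℤ) ≤ (l : ℤ) := by positivity
    have hl'0 : (0:ℤ) ≤ (l' : ℤ) := by positivity
    have key : (i : ℕ) = (i' : ℕ) ∧ (l : ℕ) = (l' : ℕ) := by
      by_cases h1 : (i : ℕ) = 0 <;> by_cases h2 : (i' : ℕ) = 0 <;>
        simp only [h1, h2, if_pos, if_neg, if_true, if_false] at heq
      · constructor
        · omega
        · have : (l : ℤ) = l' := by omega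
          exact_mod_cast this
      · exfalso
        have hi' : (1:ℤ) ≤ (i' : ℤ) := by exact_mod_cast Nat.one_le_iff_ne_zero.mpr h2
        nlinarith
      · exfalso
        have hi : (1:ℤ) ≤ (i : ℤ) := by exact_mod_cast Nat.one_le_iff_ne_zero.mpr h1
        nlinarith
      · have hi : (1:ℤ) ≤ (i : ℤ) := by exact_mod_cast Nat.one_le_iff_ne_zero.mpr h1
        have hi' : (1:ℤ) ≤ (i' : ℤ) := by exact_mod_cast Nat.one_le_iff_ne_zero.mpr h2
        have hii : (i : ℤ) = (i' : ℤ) := by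
          rcases lt_trichotomy (i : ℤ) (i' : ℤ) with hlt | he | hgt
          · exfalso; nlinarith
          · exact he
          · exfalso; nlinarith
        have hll : (l : ℤ) = (l' : ℤ) := by nlinarith
        exact ⟨by exact_mod_cast hii, by exact_mod_cast hll⟩
    obtain ⟨k1, k2⟩ := key
    exact Prod.ext (Fin.ext k1) (Fin.ext k2)
  · intro l
    simp only [if_pos rfl]
    omega
  · intro i hi l
    simp only [if_neg hi]
    have h1 : (1:ℤ) ≤ (i : ℤ) := by exact_mod_cast Nat.one_le_iff_ne_zero.mpr hi
    have hl0 : (0:ℤ) ≤ (l : ℤ) := by positivity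
    nlinarith
  · intro i k hik
    right
    intro j
    have hik' : (i : ℤ) < (k : ℤ) := by exact_mod_cast hik
    by_cases hj : (j : ℕ) = 0 <;>
      simp only [hj, if_pos, if_neg, if_true, if_false]
    · omega
    · have h1 : (1:ℤ) ≤ (j : ℤ) := by exact_mod_cast Nat.one_le_iff_ne_zero.mpr hj
      have hi0 : (0:ℤ) ≤ (i : ℤ) := by positivity
      have hk0 : (0:ℤ) ≤ (k : ℤ) := by positivity
      nlinarith
  · intro j k hjk
    left
    intro l
    have hk : (k : ℕ) ≠ 0 := by omega
    have hjk' : (j : ℤ) < (k : ℤ) := by exact_mod_cast hjk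
    have hk1 : (1:ℤ) ≤ (k : ℤ) := by exact_mod_cast Nat.one_le_iff_ne_zero.mpr hk
    have hl : (l : ℤ) < m := by exact_mod_cast l.isLt
    have hl0 : (0:ℤ) ≤ (l : ℤ) := by positivity
    by_cases hj : (j : ℕ) = 0 <;>
      simp only [hj, hk, if_pos, if_neg, if_true, if_false]
    · nlinarith
    · have h1 : (1:ℤ) ≤ (j : ℤ) := by exact_mod_cast Nat.one_le_iff_ne_zero.mpr hj
      nlinarith
end

section
/- Let a, b, c, d > 0 with c > d > a and b > a, and consider the Dixon-2 parametrization with these parameters, where f₁(t) = ((a cos t + √(b²−a² sin² t))/2, (a sin t + √(d²−a² cos² t))/2) and f₅(t) = ((−a cos t + √(b²−a² sin² t))/2, (−a sin t + √(d²−a² cos² t))/2). Writing x₁(t), y₁(t) and x₂(t), y₂(t) for the coordinates of f₁ and f₅ respectively, the four quantities (x₁−x₂)² + (y₁−y₂)², (x₁+x₂)² + (y₁−y₂)², (x₁+x₂)² + (y₁+y₂)², (x₁−x₂)² + (y₁+y₂)² are constant in t, equal to a², b², c², d² respectively, where c is determined by c² = b² + d² − a². -/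
/-- The Dixon-2 parametrization has constant edge lengths: with
`x₁ = (a cos t + √(b²−a² sin² t))/2`, `y₁ = (a sin t + √(d²−a² cos² t))/2`,
`x₂ = (−a cos t + √(b²−a² sin² t))/2`, `y₂ = (−a sin t + √(d²−a² cos² t))/2`,
the four squared distances are the constants `a²`, `b²`, `d²` and `c²`,
where `c² = b² + d² − a²`. -/
theorem dixon2_edge_lengths_constant (a b c d : ℝ) (ha : 0 < a) (hb : a < b)
    (hd : a < d) (hc : 0 < c) (hc2 : c ^ 2 = b ^ 2 + d ^ 2 - a ^ 2) :
    ∀ t : ℝ,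
      let x₁ := (a * Real.cos t + Real.sqrt (b ^ 2 - a ^ 2 * Real.sin t ^ 2)) / 2
      let y₁ := (a * Real.sin t + Real.sqrt (d ^ 2 - a ^ 2 * Real.cos t ^ 2)) / 2
      let x₂ := (-a * Real.cos t + Real.sqrt (b ^ 2 - a ^ 2 * Real.sin t ^ 2)) / 2
      let y₂ := (-a * Real.sin t + Real.sqrt (d ^ 2 - a ^ 2 * Real.cos t ^ 2)) / 2
      (x₁ - x₂) ^ 2 + (y₁ - y₂) ^ 2 = a ^ 2 ∧
      (x₁ + x₂) ^ 2 + (y₁ - y₂) ^ 2 = b ^ 2 ∧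
      (x₁ - x₂) ^ 2 + (y₁ + y₂) ^ 2 = d ^ 2 ∧
      (x₁ + x₂) ^ 2 + (y₁ + y₂) ^ 2 = c ^ 2 := by
  intro t x₁ y₁ x₂ y₂
  have hs := Real.sin_sq_add_cos_sq t
  have hsin := Real.sin_sq_le_one t
  have hcos := Real.cos_sq_le_one t
  have hBnn : 0 ≤ b ^ 2 - a ^ 2 * Real.sin t ^ 2 := by nlinarith
  have hDnn : 0 ≤ d ^ 2 - a ^ 2 * Real.cos t ^ 2 := by nlinarith
  have hB : Real.sqrt (b ^ 2 - a ^ 2 * Real.sin t ^ 2) ^ 2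
      = b ^ 2 - a ^ 2 * Real.sin t ^ 2 := Real.sq_sqrt hBnn
  have hD : Real.sqrt (d ^ 2 - a ^ 2 * Real.cos t ^ 2) ^ 2
      = d ^ 2 - a ^ 2 * Real.cos t ^ 2 := Real.sq_sqrt hDnn
  have h1 : x₁ - x₂ = a * Real.cos t := by simp only [x₁, x₂]; ring
  have h2 : y₁ - y₂ = a * Real.sin t := by simp only [y₁, y₂]; ring
  have h3 : x₁ + x₂ = Real.sqrt (b ^ 2 - a ^ 2 * Real.sin t ^ 2) := by
    simp only [x₁, x₂]; ring
  have h4 : y₁ + y₂ = Real.sqrt (d ^ 2 - a ^ 2 * Real.cos t ^ 2) := by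
    simp only [y₁, y₂]; ring
  rw [h1, h2, h3, h4]
  refine ⟨by linear_combination a ^ 2 * hs,
    by linear_combination hB,
    by linear_combination hD,
    by linear_combination hB + hD - hc2 - a ^ 2 * hs⟩
end
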